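/- Let Φ = (φ_n) be a frame for a separable Hilbert space H with canonical dual frame Φ̃, and let m = (m_n) be a sequence of nonzero scalars. Suppose G = (g_n) is a sequence in H such that for every dual frame Φ^d = (φ_n^d) of Φ and every f ∈ H, the series Σ_n m_n ⟨f, φ_n^d⟩ g_n converges to 0. Then g_n = 0 for all n. -/

import Mathlib

open scoped ComplexConjugate ComplexInnerProductSpace

variable {H : Type*} [NormedAddCommGroup H] [InnerProductSpace ℂ H] [CompleteSpace H]

/-- `Φ` is a Bessel sequence in `H`. -/
def IsBessel (Φ : ℕ → H) : Prop :=
  ∃ B : ℝ, 0 < B ∧ ∀ f : H, Summable (fun n => ‖⟪Φ n, f⟫‖ ^ 2) ∧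
    ∑' n, ‖⟪Φ n, f⟫‖ ^ 2 ≤ B * ‖f‖ ^ 2

/-- `Φ` is a frame for `H`. -/
def IsFrame (Φ : ℕ → H) : Prop :=
  ∃ A B : ℝ, 0 < A ∧ 0 < B ∧ ∀ f : H, Summable (fun n => ‖⟪Φ n, f⟫‖ ^ 2) ∧
    A * ‖f‖ ^ 2 ≤ ∑' n, ‖⟪Φ n, f⟫‖ ^ 2 ∧ ∑' n, ‖⟪Φ n, f⟫‖ ^ 2 ≤ B * ‖f‖ ^ 2

/-- `F` is a dual frame of the frame `Φ`:
`f = Σ ⟨f, Φ n⟩ F n = Σ ⟨f, F n⟩ Φ n` for all `f` (paper convention `⟨f, x⟩ = ⟪x, f⟫`). -/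
def IsDualFrame (Φ F : ℕ → H) : Prop :=
  IsFrame F ∧ ∀ f : H, HasSum (fun n => ⟪Φ n, f⟫ • F n) f ∧ HasSum (fun n => ⟪F n, f⟫ • Φ n) f

/-- `F` is an analysis pseudo-dual of `Φ`: `f = Σ ⟨f, F n⟩ Φ n` for all `f`. -/
def IsAPseudoDual (Φ F : ℕ → H) : Prop := ∀ f : H, HasSum (fun n => ⟪F n, f⟫ • Φ n) f

/-- `F` is a synthesis pseudo-dual of `Φ`: `f = Σ ⟨f, Φ n⟩ F n` for all `f`. -/
def IsSPseudoDual (Φ F : ℕ → H) : Prop := ∀ f : H, HasSum (fun n => ⟪Φ n, f⟫ • F n) f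

/-- The frame operator `S_Φ f = Σ ⟨f, Φ n⟩ Φ n`. -/
noncomputable def frameOp (Φ : ℕ → H) (f : H) : H := ∑' n, ⟪Φ n, f⟫ • Φ n

/-- `m` is semi-normalized: `0 < a ≤ ‖m n‖ ≤ b < ∞`. -/
def SemiNormalized (m : ℕ → ℂ) : Prop := ∃ a b : ℝ, 0 < a ∧ ∀ n, a ≤ ‖m n‖ ∧ ‖m n‖ ≤ b

lemma finsetCS (a b : ℕ → ℝ) (s : Finset ℕ) (ha : ∀ n, 0 ≤ a n) :
    ∑ n ∈ s, a n * b n ≤ Real.sqrt (∑ n ∈ s, a n ^ 2) * Real.sqrt (∑ n ∈ s, b n ^ 2) := by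
  rcases le_or_gt (∑ n ∈ s, a n * b n) 0 with h1 | h1
  · exact h1.trans (mul_nonneg (Real.sqrt_nonneg _) (Real.sqrt_nonneg _))
  calc ∑ n ∈ s, a n * b n = Real.sqrt ((∑ n ∈ s, a n * b n) ^ 2) := (Real.sqrt_sq h1.le).symm
    _ ≤ Real.sqrt ((∑ n ∈ s, a n ^ 2) * (∑ n ∈ s, b n ^ 2)) :=
        Real.sqrt_le_sqrt (Finset.sum_mul_sq_le_sq_mul_sq s a b)
    _ = _ := Real.sqrt_mul (Finset.sum_nonneg fun n _ => sq_nonneg _) _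

/-- Bessel-type upper bound hypothesis. -/
def BesselBound (Φ : ℕ → H) (B : ℝ) : Prop :=
  ∀ f : H, Summable (fun n => ‖⟪Φ n, f⟫‖ ^ 2) ∧ ∑' n, ‖⟪Φ n, f⟫‖ ^ 2 ≤ B * ‖f‖ ^ 2

lemma synth_finset_bound {Φ : ℕ → H} {B : ℝ} (hBp : 0 ≤ B) (h : BesselBound Φ B)
    (c : ℕ → ℂ) (s : Finset ℕ) :
    ‖∑ n ∈ s, c n • Φ n‖ ≤ Real.sqrt B * Real.sqrt (∑ n ∈ s, ‖c n‖ ^ 2) := by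
  set v := ∑ n ∈ s, c n • Φ n with hv
  have hvsq : (‖v‖ : ℝ) ^ 2 = ‖(⟪v, v⟫ : ℂ)‖ := by
    rw [@inner_self_eq_norm_sq_to_K ℂ]
    simp [norm_pow]
  have hinner : (⟪v, v⟫ : ℂ) = ∑ n ∈ s, conj (c n) * ⟪Φ n, v⟫ := by
    rw [hv, sum_inner]
    exact Finset.sum_congr rfl fun n _ => inner_smul_left _ _ _
  have h2 : ‖(⟪v, v⟫ : ℂ)‖ ≤ ∑ n ∈ s, ‖c n‖ * ‖(⟪Φ n, v⟫ : ℂ)‖ := by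
    rw [hinner]
    refine (norm_sum_le _ _).trans (le_of_eq (Finset.sum_congr rfl fun n _ => ?_))
    rw [norm_mul, RCLike.norm_conj]
  have h3 : ∑ n ∈ s, ‖c n‖ * ‖(⟪Φ n, v⟫ : ℂ)‖ ≤
      Real.sqrt (∑ n ∈ s, ‖c n‖ ^ 2) * Real.sqrt (∑ n ∈ s, ‖(⟪Φ n, v⟫ : ℂ)‖ ^ 2) :=
    finsetCS _ _ s (fun n => norm_nonneg _)
  have h4 : ∑ n ∈ s, ‖(⟪Φ n, v⟫ : ℂ)‖ ^ 2 ≤ B * ‖v‖ ^ 2 :=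
    le_trans (Summable.sum_le_tsum s (fun n _ => sq_nonneg _) (h v).1) (h v).2
  have h5 : Real.sqrt (∑ n ∈ s, ‖(⟪Φ n, v⟫ : ℂ)‖ ^ 2) ≤ Real.sqrt B * ‖v‖ := by
    refine (Real.sqrt_le_sqrt h4).trans (le_of_eq ?_)
    rw [Real.sqrt_mul hBp, Real.sqrt_sq (norm_nonneg _)]
  have key : ‖v‖ ^ 2 ≤ (Real.sqrt B * Real.sqrt (∑ n ∈ s, ‖c n‖ ^ 2)) * ‖v‖ := by
    rw [hvsq]
    calc ‖(⟪v, v⟫ : ℂ)‖ ≤ Real.sqrt (∑ n ∈ s, ‖c n‖ ^ 2) * Real.sqrt (∑ n ∈ s, ‖(⟪Φ n, v⟫ : ℂ)‖ ^ 2) := h2.trans h3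
      _ ≤ Real.sqrt (∑ n ∈ s, ‖c n‖ ^ 2) * (Real.sqrt B * ‖v‖) :=
          mul_le_mul_of_nonneg_left h5 (Real.sqrt_nonneg _)
      _ = _ := by ring
  rcases eq_or_lt_of_le (norm_nonneg v) with h0 | h0
  · rw [← h0]; positivity
  · nlinarith [key]

lemma synth_summable {Φ : ℕ → H} {B : ℝ} (hBp : 0 ≤ B) (h : BesselBound Φ B)
    {c : ℕ → ℂ} (hc : Summable fun n => ‖c n‖ ^ 2) : Summable fun n => c n • Φ n := by
  rw [summable_iff_vanishing]
  intro e he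
  rcases Metric.mem_nhds_iff.mp he with ⟨ε, hε, hball⟩
  have hc' := (summable_iff_vanishing.mp hc) (Metric.ball 0 ((ε / (Real.sqrt B + 1)) ^ 2))
    (Metric.ball_mem_nhds 0 (by positivity))
  rcases hc' with ⟨s, hs⟩
  refine ⟨s, fun t ht => ?_⟩
  apply hball
  rw [Metric.mem_ball, dist_zero_right]
  have hb := synth_finset_bound hBp h c t
  have h6 := hs t ht
  rw [Metric.mem_ball, dist_zero_right, Real.norm_eq_abs] at h6
  have h7 : ∑ n ∈ t, ‖c n‖ ^ 2 < (ε / (Real.sqrt B + 1)) ^ 2 := lt_of_abs_lt h6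
  have h8 : Real.sqrt (∑ n ∈ t, ‖c n‖ ^ 2) < ε / (Real.sqrt B + 1) := by
    have := Real.sqrt_lt_sqrt (Finset.sum_nonneg fun n _ => sq_nonneg _) h7
    rwa [Real.sqrt_sq (by positivity)] at this
  calc ‖∑ n ∈ t, c n • Φ n‖ ≤ Real.sqrt B * Real.sqrt (∑ n ∈ t, ‖c n‖ ^ 2) := hb
    _ ≤ (Real.sqrt B + 1) * Real.sqrt (∑ n ∈ t, ‖c n‖ ^ 2) := by
        have := Real.sqrt_nonneg (∑ n ∈ t, ‖c n‖ ^ 2); nlinarith [Real.sqrt_nonneg B]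
    _ < (Real.sqrt B + 1) * (ε / (Real.sqrt B + 1)) := by
        apply mul_lt_mul_of_pos_left h8 (by positivity)
    _ = ε := by field_simp


noncomputable section

lemma frameOp_hasSum {Φ : ℕ → H} {B : ℝ} (hBp : 0 ≤ B) (h : BesselBound Φ B) (f : H) :
    HasSum (fun n => ⟪Φ n, f⟫ • Φ n) (frameOp Φ f) :=
  (synth_summable hBp h (h f).1).hasSum

lemma inner_frameOp {Φ : ℕ → H} {B : ℝ} (hBp : 0 ≤ B) (h : BesselBound Φ B) (f g : H) :
    HasSum (fun n => ⟪Φ n, f⟫ * ⟪g, Φ n⟫) ⟪g, frameOp Φ f⟫ := by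
  have := (frameOp_hasSum hBp h f).mapL (innerSL ℂ g)
  simpa [inner_smul_right] using this

lemma inner_frameOp_self {Φ : ℕ → H} {B : ℝ} (hBp : 0 ≤ B) (h : BesselBound Φ B) (f : H) :
    (⟪f, frameOp Φ f⟫ : ℂ) = (∑' n, ‖⟪Φ n, f⟫‖ ^ 2 : ℝ) := by
  have h1 := inner_frameOp hBp h f f
  have h2 : ∀ n, (⟪Φ n, f⟫ : ℂ) * ⟪f, Φ n⟫ = ((‖⟪Φ n, f⟫‖ ^ 2 : ℝ) : ℂ) := by
    intro n
    rw [← inner_conj_symm f (Φ n), Complex.mul_conj']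
    norm_cast
  have h3 : HasSum (fun n => ((‖⟪Φ n, f⟫‖ ^ 2 : ℝ) : ℂ)) ⟪f, frameOp Φ f⟫ := by
    refine h1.congr_fun fun n => (h2 n).symm
  have h4 : HasSum (fun n => ((‖⟪Φ n, f⟫‖ ^ 2 : ℝ) : ℂ))
      ((∑' n, ‖⟪Φ n, f⟫‖ ^ 2 : ℝ) : ℂ) := Complex.hasSum_ofReal.mpr (h f).1.hasSum
  exact h3.unique h4

lemma frameOp_norm_le {Φ : ℕ → H} {B : ℝ} (hBp : 0 ≤ B) (h : BesselBound Φ B) (f : H) :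
    ‖frameOp Φ f‖ ≤ B * ‖f‖ := by
  have hb := frameOp_hasSum hBp h f
  refine le_of_tendsto (hb.tendsto_sum_nat.norm) (Filter.Eventually.of_forall fun N => ?_)
  have h1 := synth_finset_bound hBp h (fun n => ⟪Φ n, f⟫) (Finset.range N)
  have h2 : ∑ n ∈ Finset.range N, ‖(⟪Φ n, f⟫ : ℂ)‖ ^ 2 ≤ B * ‖f‖ ^ 2 :=
    le_trans (Summable.sum_le_tsum _ (fun n _ => sq_nonneg _) (h f).1) (h f).2
  refine h1.trans ?_
  calc Real.sqrt B * Real.sqrt (∑ n ∈ Finset.range N, ‖(⟪Φ n, f⟫ : ℂ)‖ ^ 2)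
      ≤ Real.sqrt B * Real.sqrt (B * ‖f‖ ^ 2) :=
        mul_le_mul_of_nonneg_left (Real.sqrt_le_sqrt h2) (Real.sqrt_nonneg _)
    _ = B * ‖f‖ := by
        rw [Real.sqrt_mul hBp, Real.sqrt_sq (norm_nonneg _), ← mul_assoc,
          Real.mul_self_sqrt hBp]

lemma frameOp_add {Φ : ℕ → H} {B : ℝ} (hBp : 0 ≤ B) (h : BesselBound Φ B) (f g : H) :
    frameOp Φ (f + g) = frameOp Φ f + frameOp Φ g := by
  have h1 : HasSum (fun n => ⟪Φ n, f + g⟫ • Φ n) (frameOp Φ f + frameOp Φ g) := by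
    have := (frameOp_hasSum hBp h f).add (frameOp_hasSum hBp h g)
    refine this.congr_fun fun n => ?_
    rw [inner_add_right, add_smul]
  exact (frameOp_hasSum hBp h (f + g)).unique h1

lemma frameOp_smul {Φ : ℕ → H} {B : ℝ} (hBp : 0 ≤ B) (h : BesselBound Φ B) (c : ℂ) (f : H) :
    frameOp Φ (c • f) = c • frameOp Φ f := by
  have h1 : HasSum (fun n => ⟪Φ n, c • f⟫ • Φ n) (c • frameOp Φ f) := by
    have := (frameOp_hasSum hBp h f).const_smul c
    refine this.congr_fun fun n => ?_
    rw [inner_smul_right, smul_smul]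
  exact (frameOp_hasSum hBp h (c • f)).unique h1

noncomputable def frameCLM (Φ : ℕ → H) {B : ℝ} (hBp : 0 ≤ B) (h : BesselBound Φ B) :
    H →L[ℂ] H :=
  LinearMap.mkContinuous
    { toFun := frameOp Φ
      map_add' := frameOp_add hBp h
      map_smul' := frameOp_smul hBp h } B (frameOp_norm_le hBp h)

lemma frameCLM_apply (Φ : ℕ → H) {B : ℝ} (hBp : 0 ≤ B) (h : BesselBound Φ B) (f : H) :
    frameCLM Φ hBp h f = frameOp Φ f := rfl

lemma frameOp_symm {Φ : ℕ → H} {B : ℝ} (hBp : 0 ≤ B) (h : BesselBound Φ B) (f g : H) :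
    ⟪frameOp Φ f, g⟫ = ⟪f, frameOp Φ g⟫ := by
  rw [← inner_conj_symm (frameOp Φ f) g]
  have h1 := (inner_frameOp hBp h f g).star
  have h2 : HasSum (fun n => ⟪Φ n, g⟫ * ⟪f, Φ n⟫) (starRingEnd ℂ ⟪g, frameOp Φ f⟫) := by
    refine h1.congr_fun fun n => ?_
    simp only [star_mul, RCLike.star_def, inner_conj_symm]
  exact h2.unique (inner_frameOp hBp h g f)

lemma frameOp_norm_lower {Φ : ℕ → H} {A B : ℝ} (hBp : 0 ≤ B) (h : BesselBound Φ B)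
    (hlow : ∀ f : H, A * ‖f‖ ^ 2 ≤ ∑' n, ‖⟪Φ n, f⟫‖ ^ 2) (f : H) :
    A * ‖f‖ ^ 2 ≤ ‖f‖ * ‖frameOp Φ f‖ := by
  have h1 := inner_frameOp_self hBp h f
  have h2 : ‖(⟪f, frameOp Φ f⟫ : ℂ)‖ = ∑' n, ‖⟪Φ n, f⟫‖ ^ 2 := by
    rw [h1, Complex.norm_real, Real.norm_eq_abs, abs_of_nonneg]
    exact tsum_nonneg fun n => sq_nonneg _
  calc A * ‖f‖ ^ 2 ≤ ∑' n, ‖⟪Φ n, f⟫‖ ^ 2 := hlow f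
    _ = ‖(⟪f, frameOp Φ f⟫ : ℂ)‖ := h2.symm
    _ ≤ ‖f‖ * ‖frameOp Φ f‖ := norm_inner_le_norm f _

lemma frameOp_lower {Φ : ℕ → H} {A B : ℝ} (hA : 0 < A) (hBp : 0 ≤ B) (h : BesselBound Φ B)
    (hlow : ∀ f : H, A * ‖f‖ ^ 2 ≤ ∑' n, ‖⟪Φ n, f⟫‖ ^ 2) (f : H) :
    A * ‖f‖ ≤ ‖frameOp Φ f‖ := by
  rcases eq_or_lt_of_le (norm_nonneg f) with h0 | h0
  · rw [← h0]; simp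
  · have := frameOp_norm_lower hBp h hlow f
    nlinarith

noncomputable def frameEquiv (Φ : ℕ → H) {A B : ℝ} (hA : 0 < A) (hBp : 0 ≤ B)
    (h : BesselBound Φ B)
    (hlow : ∀ f : H, A * ‖f‖ ^ 2 ≤ ∑' n, ‖⟪Φ n, f⟫‖ ^ 2) : H ≃L[ℂ] H := by
  refine ContinuousLinearEquiv.ofBijective (frameCLM Φ hBp h) ?_ ?_
  · rw [LinearMap.ker_eq_bot']
    intro f hf
    have h1 := frameOp_lower hA hBp h hlow f
    rw [← frameCLM_apply Φ hBp h, show (frameCLM Φ hBp h) f = 0 from hf, norm_zero] at h1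
    have : ‖f‖ ≤ 0 := by nlinarith
    exact norm_le_zero_iff.mp this
  · set S := frameCLM Φ hBp h with hS
    have hanti : AntilipschitzWith ⟨A⁻¹, by positivity⟩ S :=
      S.antilipschitz_of_bound fun x => by
        have h1 := frameOp_lower hA hBp h hlow x
        change ‖x‖ ≤ A⁻¹ * ‖S x‖
        rw [← frameCLM_apply Φ hBp h, ← hS] at h1
        rw [inv_mul_eq_div, le_div_iff₀ hA, mul_comm]
        exact h1
    have hclosed : IsClosed (LinearMap.range (S : H →ₗ[ℂ] H) : Set H) := by
      have := hanti.isClosed_range S.uniformContinuous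
      rw [LinearMap.coe_range]
      simpa using this
    haveI : CompleteSpace (LinearMap.range (S : H →ₗ[ℂ] H)) := hclosed.completeSpace_coe
    rw [← Submodule.orthogonal_eq_bot_iff]
    rw [Submodule.eq_bot_iff]
    intro x hx
    have hx' : (⟪S x, x⟫ : ℂ) = 0 := (Submodule.mem_orthogonal _ x).mp hx (S x) ⟨x, rfl⟩
    have hx'' : (⟪x, S x⟫ : ℂ) = 0 := by
      rw [← inner_conj_symm x (S x), hx', map_zero]
    have h3 : ((∑' n, ‖⟪Φ n, x⟫‖ ^ 2 : ℝ) : ℂ) = 0 := by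
      rw [← inner_frameOp_self hBp h x]; exact hx''
    have h4 : (∑' n, ‖⟪Φ n, x⟫‖ ^ 2 : ℝ) = 0 := by exact_mod_cast h3
    have h5 := hlow x
    rw [h4] at h5
    have h7 : ‖x‖ ^ 2 = 0 := le_antisymm (by nlinarith) (sq_nonneg _)
    exact norm_eq_zero.mp (pow_eq_zero_iff two_ne_zero |>.mp h7)

lemma tsumCS_summable {a b : ℕ → ℝ} (ha0 : ∀ n, 0 ≤ a n) (hb0 : ∀ n, 0 ≤ b n)
    (ha : Summable fun n => a n ^ 2) (hb : Summable fun n => b n ^ 2) :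
    Summable fun n => a n * b n := by
  refine Summable.of_nonneg_of_le (fun n => mul_nonneg (ha0 n) (hb0 n))
    (fun n => ?_) ((ha.add hb).div_const 2)
  have h := sq_nonneg (a n - b n)
  nlinarith

lemma tsumCS {a b : ℕ → ℝ} (ha0 : ∀ n, 0 ≤ a n) (hb0 : ∀ n, 0 ≤ b n)
    (ha : Summable fun n => a n ^ 2) (hb : Summable fun n => b n ^ 2) :
    ∑' n, a n * b n ≤ Real.sqrt (∑' n, a n ^ 2) * Real.sqrt (∑' n, b n ^ 2) := by
  refine Summable.tsum_le_of_sum_le (tsumCS_summable ha0 hb0 ha hb) fun s => ?_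
  refine (finsetCS a b s ha0).trans ?_
  have h1 : Real.sqrt (∑ n ∈ s, a n ^ 2) ≤ Real.sqrt (∑' n, a n ^ 2) :=
    Real.sqrt_le_sqrt (Summable.sum_le_tsum s (fun n _ => sq_nonneg _) ha)
  have h2 : Real.sqrt (∑ n ∈ s, b n ^ 2) ≤ Real.sqrt (∑' n, b n ^ 2) :=
    Real.sqrt_le_sqrt (Summable.sum_le_tsum s (fun n _ => sq_nonneg _) hb)
  exact mul_le_mul h1 h2 (Real.sqrt_nonneg _) (Real.sqrt_nonneg _)

/-- Reconstruction + Bessel on `Φ` forces a lower frame bound for `F`. -/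
lemma recon_lower {Φ F : ℕ → H} {B : ℝ} (hBp : 0 ≤ B) (hΦ : BesselBound Φ B)
    (hFs : ∀ f : H, Summable fun n => ‖⟪F n, f⟫‖ ^ 2)
    (hrec : ∀ f : H, HasSum (fun n => ⟪F n, f⟫ • Φ n) f) (f : H) :
    ‖f‖ ^ 2 ≤ B * ∑' n, ‖⟪F n, f⟫‖ ^ 2 := by
  have h1 : HasSum (fun n => (⟪F n, f⟫ : ℂ) * ⟪f, Φ n⟫) ⟪f, f⟫ := by
    have := (hrec f).mapL (innerSL ℂ f)
    simpa [inner_smul_right] using this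
  have hsum : Summable fun n => ‖(⟪F n, f⟫ : ℂ)‖ * ‖(⟪f, Φ n⟫ : ℂ)‖ := by
    refine tsumCS_summable (fun n => norm_nonneg _) (fun n => norm_nonneg _) (hFs f) ?_
    refine ((hΦ f).1).congr fun n => ?_
    rw [← norm_inner_symm]
  have h2 : ‖(⟪f, f⟫ : ℂ)‖ ≤ ∑' n, ‖(⟪F n, f⟫ : ℂ)‖ * ‖(⟪f, Φ n⟫ : ℂ)‖ := by
    rw [← h1.tsum_eq]
    refine (norm_tsum_le_tsum_norm ?_).trans (le_of_eq (tsum_congr fun n => norm_mul _ _))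
    exact hsum.congr fun n => (norm_mul _ _).symm
  have h3 : ∑' n, ‖(⟪F n, f⟫ : ℂ)‖ * ‖(⟪f, Φ n⟫ : ℂ)‖ ≤
      Real.sqrt (∑' n, ‖(⟪F n, f⟫ : ℂ)‖ ^ 2) * Real.sqrt (∑' n, ‖(⟪f, Φ n⟫ : ℂ)‖ ^ 2) :=
    tsumCS (fun n => norm_nonneg _) (fun n => norm_nonneg _) (hFs f)
      (((hΦ f).1).congr fun n => by rw [← norm_inner_symm])
  have h4 : (∑' n, ‖(⟪f, Φ n⟫ : ℂ)‖ ^ 2) ≤ B * ‖f‖ ^ 2 := by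
    refine le_trans (le_of_eq (tsum_congr fun n => ?_)) (hΦ f).2
    rw [norm_inner_symm]
  have h5 : ‖(⟪f, f⟫ : ℂ)‖ = ‖f‖ ^ 2 := by
    rw [@inner_self_eq_norm_sq_to_K ℂ]
    norm_num
  set T := ∑' n, ‖(⟪F n, f⟫ : ℂ)‖ ^ 2 with hT
  have hT0 : 0 ≤ T := tsum_nonneg fun n => sq_nonneg _
  have h6 : ‖f‖ ^ 2 ≤ Real.sqrt T * (Real.sqrt B * ‖f‖) := by
    rw [← h5]
    refine h2.trans (h3.trans ?_)
    refine mul_le_mul_of_nonneg_left ?_ (Real.sqrt_nonneg _)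
    refine (Real.sqrt_le_sqrt h4).trans (le_of_eq ?_)
    rw [Real.sqrt_mul hBp, Real.sqrt_sq (norm_nonneg _)]
  rcases eq_or_lt_of_le (norm_nonneg f) with h0 | h0
  · rw [← h0]; norm_num; exact mul_nonneg hBp hT0
  · have h7 : ‖f‖ ≤ Real.sqrt T * Real.sqrt B := by nlinarith
    have h8 : ‖f‖ ^ 2 ≤ (Real.sqrt T * Real.sqrt B) ^ 2 := by nlinarith [Real.sqrt_nonneg T, Real.sqrt_nonneg B]
    calc ‖f‖ ^ 2 ≤ (Real.sqrt T * Real.sqrt B) ^ 2 := h8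
      _ = B * T := by rw [mul_pow, Real.sq_sqrt hT0, Real.sq_sqrt hBp]; ring

section CanDual
variable {Φ : ℕ → H} {A B : ℝ} (hA : 0 < A) (hBp : 0 ≤ B) (h : BesselBound Φ B)
  (hlow : ∀ f : H, A * ‖f‖ ^ 2 ≤ ∑' n, ‖⟪Φ n, f⟫‖ ^ 2)

lemma frameEquiv_apply (f : H) : frameEquiv Φ hA hBp h hlow f = frameOp Φ f := rfl

/-- The canonical dual frame. -/
def canDual : ℕ → H := fun n => (frameEquiv Φ hA hBp h hlow).symm (Φ n)

lemma inner_canDual (n : ℕ) (f : H) :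
    (⟪canDual hA hBp h hlow n, f⟫ : ℂ) = ⟪Φ n, (frameEquiv Φ hA hBp h hlow).symm f⟫ := by
  set E := frameEquiv Φ hA hBp h hlow with hE
  show (⟪E.symm (Φ n), f⟫ : ℂ) = ⟪Φ n, E.symm f⟫
  have h2 : frameOp Φ (E.symm f) = f := E.apply_symm_apply f
  have h3 : frameOp Φ (E.symm (Φ n)) = Φ n := E.apply_symm_apply (Φ n)
  rw [← h2, ← frameOp_symm hBp h, h3, h2]

lemma canDual_hasSum1 (f : H) :
    HasSum (fun n => (⟪Φ n, f⟫ : ℂ) • canDual hA hBp h hlow n) f := by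
  set E := frameEquiv Φ hA hBp h hlow with hE
  have h1 := (frameOp_hasSum hBp h f).mapL (E.symm : H →L[ℂ] H)
  have h2 : (E.symm : H →L[ℂ] H) (frameOp Φ f) = f := by
    show E.symm (frameOp Φ f) = f
    rw [← frameEquiv_apply hA hBp h hlow, ← hE, E.symm_apply_apply]
  rw [h2] at h1
  refine h1.congr_fun fun n => ?_
  simp [canDual]
  rfl

lemma canDual_hasSum2 (f : H) :
    HasSum (fun n => (⟪canDual hA hBp h hlow n, f⟫ : ℂ) • Φ n) f := by
  set E := frameEquiv Φ hA hBp h hlow with hE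
  have h1 := frameOp_hasSum hBp h (E.symm f)
  have h2 : frameOp Φ (E.symm f) = f := by
    rw [← frameEquiv_apply hA hBp h hlow, ← hE, E.apply_symm_apply]
  rw [h2] at h1
  refine h1.congr_fun fun n => ?_
  rw [inner_canDual]

lemma canDual_sq_summable (f : H) :
    Summable fun n => ‖(⟪canDual hA hBp h hlow n, f⟫ : ℂ)‖ ^ 2 := by
  refine ((h ((frameEquiv Φ hA hBp h hlow).symm f)).1).congr fun n => ?_
  rw [inner_canDual]

lemma canDual_bessel :
    BesselBound (canDual hA hBp h hlow)
      (B * ‖((frameEquiv Φ hA hBp h hlow).symm : H →L[ℂ] H)‖ ^ 2 + 1) := by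
  intro f
  set E := frameEquiv Φ hA hBp h hlow with hE
  refine ⟨canDual_sq_summable hA hBp h hlow f, ?_⟩
  have h1 : ∑' n, ‖(⟪canDual hA hBp h hlow n, f⟫ : ℂ)‖ ^ 2
      = ∑' n, ‖(⟪Φ n, E.symm f⟫ : ℂ)‖ ^ 2 := by
    refine tsum_congr fun n => ?_
    rw [inner_canDual]
  rw [h1]
  have h2 := (h (E.symm f)).2
  have h3 : ‖E.symm f‖ ≤ ‖(E.symm : H →L[ℂ] H)‖ * ‖f‖ := (E.symm : H →L[ℂ] H).le_opNorm f
  have h4 : ‖E.symm f‖ ^ 2 ≤ ‖(E.symm : H →L[ℂ] H)‖ ^ 2 * ‖f‖ ^ 2 := by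
    nlinarith [norm_nonneg (E.symm f), norm_nonneg ((E.symm : H →L[ℂ] H)), norm_nonneg f]
  nlinarith [sq_nonneg ‖f‖, (tsum_nonneg (fun n => sq_nonneg ‖(⟪Φ n, E.symm f⟫ : ℂ)‖) : (0:ℝ) ≤ ∑' n, ‖(⟪Φ n, E.symm f⟫ : ℂ)‖ ^ 2)]

lemma sq_norm_add_le (u v : ℂ) : ‖u + v‖ ^ 2 ≤ 2 * (‖u‖ ^ 2 + ‖v‖ ^ 2) := by
  have h1 : ‖u + v‖ ≤ ‖u‖ + ‖v‖ := norm_add_le u v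
  nlinarith [norm_nonneg u, norm_nonneg v, norm_nonneg (u + v), sq_nonneg (‖u‖ - ‖v‖)]

section Perturb
variable (k : ℕ) (h0 : H)

/-- Coefficients of the perturbation. -/
def aSeq : ℕ → ℂ :=
  fun n => (if n = k then 1 else 0) - ⟪Φ k, canDual hA hBp h hlow n⟫

lemma aSeq_sq_summable : Summable fun n => ‖aSeq hA hBp h hlow k n‖ ^ 2 := by
  have h1 : Summable fun n => ‖(⟪canDual hA hBp h hlow n, Φ k⟫ : ℂ)‖ ^ 2 :=
    canDual_sq_summable hA hBp h hlow (Φ k)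
  have h2 : Summable fun n => ‖(if n = k then (1 : ℂ) else 0)‖ ^ 2 := by
    apply summable_of_ne_finset_zero (s := {k})
    intro n hn
    simp only [Finset.mem_singleton] at hn
    simp [if_neg hn]
  refine Summable.of_nonneg_of_le (fun n => sq_nonneg _) (fun n => ?_)
    (((h2.add h1).mul_left 2))
  have h3 : ‖(⟪Φ k, canDual hA hBp h hlow n⟫ : ℂ)‖ =
      ‖(⟪canDual hA hBp h hlow n, Φ k⟫ : ℂ)‖ := norm_inner_symm _ _
  have := sq_norm_add_le (if n = k then (1 : ℂ) else 0) (-⟪Φ k, canDual hA hBp h hlow n⟫)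
  simp only [norm_neg] at this
  calc ‖aSeq hA hBp h hlow k n‖ ^ 2
      = ‖(if n = k then (1 : ℂ) else 0) + -⟪Φ k, canDual hA hBp h hlow n⟫‖ ^ 2 := by
        rw [aSeq, sub_eq_add_neg]
    _ ≤ 2 * (‖(if n = k then (1 : ℂ) else 0)‖ ^ 2 + ‖(⟪Φ k, canDual hA hBp h hlow n⟫ : ℂ)‖ ^ 2) := this
    _ = 2 * (‖(if n = k then (1 : ℂ) else 0)‖ ^ 2 + ‖(⟪canDual hA hBp h hlow n, Φ k⟫ : ℂ)‖ ^ 2) := by rw [h3]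

lemma aSeq_null1 (f : H) :
    HasSum (fun n => aSeq hA hBp h hlow k n * ⟪Φ n, f⟫) 0 := by
  have h1 : HasSum (fun n => (if n = k then (1 : ℂ) else 0) * ⟪Φ n, f⟫) ⟪Φ k, f⟫ := by
    refine (hasSum_ite_eq k (⟪Φ k, f⟫ : ℂ)).congr_fun fun n => ?_
    by_cases hn : n = k <;> simp [hn]
  have h2 : HasSum (fun n => (⟪Φ k, canDual hA hBp h hlow n⟫ : ℂ) * ⟪Φ n, f⟫) ⟪Φ k, f⟫ := by
    have h3 := (canDual_hasSum1 hA hBp h hlow f).mapL (innerSL ℂ (Φ k))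
    refine h3.congr_fun fun n => ?_
    simp [inner_smul_right]
    ring
  have := h1.sub h2
  rw [sub_self] at this
  refine this.congr_fun fun n => ?_
  rw [aSeq, sub_mul]

lemma aSeq_null2 :
    HasSum (fun n => (starRingEnd ℂ) (aSeq hA hBp h hlow k n) • Φ n) 0 := by
  have h1 : HasSum (fun n => ((if n = k then (1 : ℂ) else 0)) • Φ n) (Φ k) := by
    refine (hasSum_ite_eq k (Φ k)).congr_fun fun n => ?_
    by_cases hn : n = k <;> simp [hn]
  have h2 : HasSum (fun n => (⟪canDual hA hBp h hlow n, Φ k⟫ : ℂ) • Φ n) (Φ k) :=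
    canDual_hasSum2 hA hBp h hlow (Φ k)
  have := h1.sub h2
  rw [sub_self] at this
  refine this.congr_fun fun n => ?_
  rw [aSeq, map_sub, sub_smul, inner_conj_symm]
  congr 2
  by_cases hn : n = k <;> simp [hn]

/-- The perturbed dual frame. -/
def pertDual : ℕ → H :=
  fun n => canDual hA hBp h hlow n + aSeq hA hBp h hlow k n • h0

lemma inner_pertDual (n : ℕ) (f : H) :
    (⟪pertDual hA hBp h hlow k h0 n, f⟫ : ℂ) =
      ⟪canDual hA hBp h hlow n, f⟫ +
        (starRingEnd ℂ) (aSeq hA hBp h hlow k n) * ⟪h0, f⟫ := by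
  rw [pertDual, inner_add_left, inner_smul_left]

lemma pertDual_hasSum1 (f : H) :
    HasSum (fun n => (⟪Φ n, f⟫ : ℂ) • pertDual hA hBp h hlow k h0 n) f := by
  have h1 := canDual_hasSum1 hA hBp h hlow f
  have h2 : HasSum (fun n => (aSeq hA hBp h hlow k n * ⟪Φ n, f⟫) • h0) 0 := by
    simpa using (aSeq_null1 hA hBp h hlow k f).smul_const h0
  have := h1.add h2
  rw [add_zero] at this
  refine this.congr_fun fun n => ?_
  rw [pertDual, smul_add, smul_smul, mul_comm]

lemma pertDual_hasSum2 (f : H) :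
    HasSum (fun n => (⟪pertDual hA hBp h hlow k h0 n, f⟫ : ℂ) • Φ n) f := by
  have h1 := canDual_hasSum2 hA hBp h hlow f
  have h2 : HasSum (fun n => ((starRingEnd ℂ) (aSeq hA hBp h hlow k n) * ⟪h0, f⟫) • Φ n) 0 := by
    have h3 := (aSeq_null2 hA hBp h hlow k).const_smul ((⟪h0, f⟫ : ℂ))
    rw [smul_zero] at h3
    refine h3.congr_fun fun n => ?_
    rw [smul_smul, mul_comm]
  have := h1.add h2
  rw [add_zero] at this
  refine this.congr_fun fun n => ?_
  rw [inner_pertDual, add_smul]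

lemma pertDual_sq_summable (f : H) :
    Summable fun n => ‖(⟪pertDual hA hBp h hlow k h0 n, f⟫ : ℂ)‖ ^ 2 := by
  have hu := canDual_sq_summable hA hBp h hlow f
  have hv : Summable fun n =>
      ‖(starRingEnd ℂ) (aSeq hA hBp h hlow k n) * ⟪h0, f⟫‖ ^ 2 := by
    have := (aSeq_sq_summable hA hBp h hlow k).mul_right (‖(⟪h0, f⟫ : ℂ)‖ ^ 2)
    refine this.congr fun n => ?_
    rw [norm_mul, RCLike.norm_conj, mul_pow]
  refine Summable.of_nonneg_of_le (fun n => sq_nonneg _) (fun n => ?_)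
    ((hu.add hv).mul_left 2)
  rw [inner_pertDual]
  exact sq_norm_add_le _ _


lemma isFrame_of_recon {Φ' F : ℕ → H} {B' : ℝ} (hBp' : 0 ≤ B') (h' : BesselBound Φ' B')
    (hFs : ∀ f : H, Summable fun n => ‖⟪F n, f⟫‖ ^ 2)
    (hrec : ∀ f : H, HasSum (fun n => ⟪F n, f⟫ • Φ' n) f)
    {C : ℝ} (hC : 0 < C) (hup : ∀ f : H, ∑' n, ‖⟪F n, f⟫‖ ^ 2 ≤ C * ‖f‖ ^ 2) :
    IsFrame F := by
  refine ⟨(B' + 1)⁻¹, C, by positivity, hC, fun f => ⟨hFs f, ?_, hup f⟩⟩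
  have h1 := recon_lower hBp' h' hFs hrec f
  have hT : (0:ℝ) ≤ ∑' n, ‖(⟪F n, f⟫ : ℂ)‖ ^ 2 := tsum_nonneg fun n => sq_nonneg _
  rw [inv_mul_le_iff₀ (by positivity)]
  nlinarith

lemma canDual_isDualFrame : IsDualFrame Φ (canDual hA hBp h hlow) := by
  constructor
  · refine isFrame_of_recon hBp h (canDual_sq_summable hA hBp h hlow)
      (canDual_hasSum2 hA hBp h hlow)
      (C := B * ‖((frameEquiv Φ hA hBp h hlow).symm : H →L[ℂ] H)‖ ^ 2 + 1)
      (by nlinarith [sq_nonneg ‖((frameEquiv Φ hA hBp h hlow).symm : H →L[ℂ] H)‖,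
        mul_nonneg hBp (sq_nonneg ‖((frameEquiv Φ hA hBp h hlow).symm : H →L[ℂ] H)‖)])
      (fun f => (canDual_bessel hA hBp h hlow f).2)
  · exact fun f => ⟨canDual_hasSum1 hA hBp h hlow f, canDual_hasSum2 hA hBp h hlow f⟩

lemma pertDual_bessel_up (k : ℕ) (h0 : H) (f : H) :
    ∑' n, ‖(⟪pertDual hA hBp h hlow k h0 n, f⟫ : ℂ)‖ ^ 2 ≤
      (2 * ((B * ‖((frameEquiv Φ hA hBp h hlow).symm : H →L[ℂ] H)‖ ^ 2 + 1) +
        (∑' n, ‖aSeq hA hBp h hlow k n‖ ^ 2) * ‖h0‖ ^ 2) + 1) * ‖f‖ ^ 2 := by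
  set Bc := B * ‖((frameEquiv Φ hA hBp h hlow).symm : H →L[ℂ] H)‖ ^ 2 + 1 with hBc
  set Ca := ∑' n, ‖aSeq hA hBp h hlow k n‖ ^ 2 with hCa
  have hCa0 : 0 ≤ Ca := tsum_nonneg fun n => sq_nonneg _
  have hu := canDual_sq_summable hA hBp h hlow f
  have hv : Summable fun n =>
      ‖(starRingEnd ℂ) (aSeq hA hBp h hlow k n) * ⟪h0, f⟫‖ ^ 2 := by
    have := (aSeq_sq_summable hA hBp h hlow k).mul_right (‖(⟪h0, f⟫ : ℂ)‖ ^ 2)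
    refine this.congr fun n => ?_
    rw [norm_mul, RCLike.norm_conj, mul_pow]
  have hvsum : ∑' n, ‖(starRingEnd ℂ) (aSeq hA hBp h hlow k n) * ⟪h0, f⟫‖ ^ 2
      = Ca * ‖(⟪h0, f⟫ : ℂ)‖ ^ 2 := by
    rw [hCa, ← tsum_mul_right]
    refine tsum_congr fun n => ?_
    rw [norm_mul, RCLike.norm_conj, mul_pow]
  have step1 : ∑' n, ‖(⟪pertDual hA hBp h hlow k h0 n, f⟫ : ℂ)‖ ^ 2 ≤
      ∑' n, 2 * (‖(⟪canDual hA hBp h hlow n, f⟫ : ℂ)‖ ^ 2 +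
        ‖(starRingEnd ℂ) (aSeq hA hBp h hlow k n) * ⟪h0, f⟫‖ ^ 2) := by
    refine Summable.tsum_le_tsum (fun n => ?_) (pertDual_sq_summable hA hBp h hlow k h0 f)
      (((hu.add hv).mul_left 2))
    rw [inner_pertDual]
    exact sq_norm_add_le _ _
  have step2 : ∑' n, 2 * (‖(⟪canDual hA hBp h hlow n, f⟫ : ℂ)‖ ^ 2 +
        ‖(starRingEnd ℂ) (aSeq hA hBp h hlow k n) * ⟪h0, f⟫‖ ^ 2)
      = 2 * ((∑' n, ‖(⟪canDual hA hBp h hlow n, f⟫ : ℂ)‖ ^ 2) + Ca * ‖(⟪h0, f⟫ : ℂ)‖ ^ 2) := by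
    rw [tsum_mul_left, Summable.tsum_add hu hv, hvsum]
  have h1 : (∑' n, ‖(⟪canDual hA hBp h hlow n, f⟫ : ℂ)‖ ^ 2) ≤ Bc * ‖f‖ ^ 2 :=
    (canDual_bessel hA hBp h hlow f).2
  have h2 : ‖(⟪h0, f⟫ : ℂ)‖ ^ 2 ≤ ‖h0‖ ^ 2 * ‖f‖ ^ 2 := by
    have := norm_inner_le_norm (𝕜 := ℂ) h0 f
    nlinarith [norm_nonneg h0, norm_nonneg f, norm_nonneg ((⟪h0, f⟫ : ℂ))]
  calc ∑' n, ‖(⟪pertDual hA hBp h hlow k h0 n, f⟫ : ℂ)‖ ^ 2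
      ≤ 2 * ((∑' n, ‖(⟪canDual hA hBp h hlow n, f⟫ : ℂ)‖ ^ 2) + Ca * ‖(⟪h0, f⟫ : ℂ)‖ ^ 2) := by
        rw [← step2]; exact step1
    _ ≤ (2 * (Bc + Ca * ‖h0‖ ^ 2) + 1) * ‖f‖ ^ 2 := by
        have h6 := mul_le_mul_of_nonneg_left h2 hCa0
        have h7 := sq_nonneg ‖f‖
        nlinarith

lemma pertDual_isDualFrame (k : ℕ) (h0 : H) :
    IsDualFrame Φ (pertDual hA hBp h hlow k h0) := by
  set Bc := B * ‖((frameEquiv Φ hA hBp h hlow).symm : H →L[ℂ] H)‖ ^ 2 + 1 with hBc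
  set Ca := ∑' n, ‖aSeq hA hBp h hlow k n‖ ^ 2 with hCa
  have hCa0 : 0 ≤ Ca := tsum_nonneg fun n => sq_nonneg _
  have hBc0 : 0 < Bc := by
    have : 0 ≤ B * ‖((frameEquiv Φ hA hBp h hlow).symm : H →L[ℂ] H)‖ ^ 2 :=
      mul_nonneg hBp (sq_nonneg _)
    nlinarith
  constructor
  · refine isFrame_of_recon hBp h (pertDual_sq_summable hA hBp h hlow k h0)
      (pertDual_hasSum2 hA hBp h hlow k h0)
      (C := 2 * (Bc + Ca * ‖h0‖ ^ 2) + 1)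
      (by nlinarith [mul_nonneg hCa0 (sq_nonneg ‖h0‖)])
      (fun f => pertDual_bessel_up hA hBp h hlow k h0 f)
  · exact fun f => ⟨pertDual_hasSum1 hA hBp h hlow k h0 f,
      pertDual_hasSum2 hA hBp h hlow k h0 f⟩

end Perturb
end CanDual

theorem stmt0 (Φ G : ℕ → H) (m : ℕ → ℂ) (hΦ : IsFrame Φ) (hm : ∀ n, m n ≠ 0)
    (hG : ∀ Φd : ℕ → H, IsDualFrame Φ Φd → ∀ f : H,
      HasSum (fun n => (m n * ⟪Φd n, f⟫) • G n) 0) :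
    ∀ n, G n = 0 := by
  intro k
  obtain ⟨A, B, hA, hB, hfr⟩ := hΦ
  have h : BesselBound Φ B := fun f => ⟨(hfr f).1, (hfr f).2.2⟩
  have hlow : ∀ f : H, A * ‖f‖ ^ 2 ≤ ∑' n, ‖⟪Φ n, f⟫‖ ^ 2 := fun f => (hfr f).2.1
  have hBp : (0:ℝ) ≤ B := hB.le
  by_cases hGk : G k = 0
  · exact hGk
  exfalso
  have hDdual := canDual_isDualFrame hA hBp h hlow
  set f : H := G k with hf
  set c : ℂ := ⟪G k, G k⟫ with hc
  have hcne : c ≠ 0 := inner_self_ne_zero.mpr hGk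
  have hPdual := pertDual_isDualFrame hA hBp h hlow k (G k)
  have H1 := hG _ hPdual f
  have H2 := hG _ hDdual f
  have H3 : HasSum (fun n =>
      (m n * ((starRingEnd ℂ) (aSeq hA hBp h hlow k n) * c)) • G n) 0 := by
    have h4 := H1.sub H2
    rw [sub_self] at h4
    refine h4.congr_fun fun n => ?_
    rw [inner_pertDual, ← sub_smul]
    congr 1
    ring
  have H4 : HasSum (fun n => (m n * (starRingEnd ℂ) (aSeq hA hBp h hlow k n)) • G n) 0 := by
    have h5 := H3.const_smul (c⁻¹)
    rw [smul_zero] at h5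
    refine h5.congr_fun fun n => ?_
    rw [smul_smul]
    congr 1
    rw [hf] at *
    field_simp
  have H5 := hG _ hDdual (Φ k)
  have H6 : HasSum (fun n => (m n * (if n = k then (1:ℂ) else 0)) • G n) 0 := by
    have h7 := H4.add H5
    rw [add_zero] at h7
    refine h7.congr_fun fun n => ?_
    rw [← add_smul]
    congr 1
    rw [aSeq, map_sub, inner_conj_symm]
    have : (starRingEnd ℂ) (if n = k then (1:ℂ) else 0) = (if n = k then (1:ℂ) else 0) := by
      by_cases hn : n = k <;> simp [hn]
    rw [this]
    ring
  have H7 : HasSum (fun n => (m n * (if n = k then (1:ℂ) else 0)) • G n) (m k • G k) := by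
    refine (hasSum_ite_eq k (m k • G k)).congr_fun fun n => ?_
    by_cases hn : n = k <;> simp [hn]
  have H8 : m k • G k = 0 := (H7.unique H6)
  rcases smul_eq_zero.mp H8 with h9 | h9
  · exact hm k h9
  · exact hGk h9
end
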